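/- Fix c with c² > 2. There exists μ₀ ∈ (0,1) such that for every μ ∈ (0, μ₀) there is exactly one ω ≥ 0 with c² μ ω² = 1 + μ + √((1+μ)² − 4μ sin²(ω)). -/

import Mathlib

noncomputable def lamPlus (μ ω : ℝ) : ℝ :=
  1 + μ + Real.sqrt ((1 + μ) ^ 2 - 4 * μ * (Real.sin ω) ^ 2)

lemma sin_sq_diff (a b : ℝ) :
    Real.sin a ^ 2 - Real.sin b ^ 2 = Real.sin (a + b) * Real.sin (a - b) := by
  rw [Real.sin_add, Real.sin_sub]
  have ha := Real.sin_sq_add_cos_sq a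
  have hb := Real.sin_sq_add_cos_sq b
  nlinarith [ha, hb]

lemma lam_lower (μ ω : ℝ) (hμ : 0 < μ) (hμ1 : μ < 1) : 2 ≤ lamPlus μ ω := by
  have h : (1 - μ) ≤ Real.sqrt ((1 + μ) ^ 2 - 4 * μ * Real.sin ω ^ 2) := by
    rw [show (1:ℝ) - μ = Real.sqrt ((1 - μ)^2) by
      rw [Real.sqrt_sq (by linarith)]]
    apply Real.sqrt_le_sqrt
    nlinarith [Real.sin_sq_le_one ω]
  unfold lamPlus; linarith

lemma lam_upper (μ ω : ℝ) (hμ : 0 < μ) : lamPlus μ ω ≤ 2 + 2 * μ := by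
  have h : Real.sqrt ((1 + μ) ^ 2 - 4 * μ * Real.sin ω ^ 2) ≤ 1 + μ := by
    have h1 : Real.sqrt ((1 + μ) ^ 2 - 4 * μ * Real.sin ω ^ 2) ≤ Real.sqrt ((1 + μ)^2) :=
      Real.sqrt_le_sqrt (by nlinarith [sq_nonneg (Real.sin ω)])
    rwa [Real.sqrt_sq (by linarith)] at h1
  unfold lamPlus; linarith

lemma lam_lip (μ x y : ℝ) (hμ : 0 < μ) (hμ2 : μ ≤ 1/2) :
    |lamPlus μ y - lamPlus μ x| ≤ 4 * μ * |y - x| := by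
  set u := (1 + μ) ^ 2 - 4 * μ * Real.sin x ^ 2 with hu
  set v := (1 + μ) ^ 2 - 4 * μ * Real.sin y ^ 2 with hv
  have hum : (1 - μ)^2 ≤ u := by nlinarith [Real.sin_sq_le_one x]
  have hvm : (1 - μ)^2 ≤ v := by nlinarith [Real.sin_sq_le_one y]
  have hun : (0:ℝ) ≤ u := le_trans (by positivity) hum
  have hvn : (0:ℝ) ≤ v := le_trans (by positivity) hvm
  have hus : (1 - μ) ≤ Real.sqrt u := by
    rw [show (1:ℝ) - μ = Real.sqrt ((1 - μ)^2) by rw [Real.sqrt_sq (by linarith)]]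
    exact Real.sqrt_le_sqrt hum
  have hvs : (1 - μ) ≤ Real.sqrt v := by
    rw [show (1:ℝ) - μ = Real.sqrt ((1 - μ)^2) by rw [Real.sqrt_sq (by linarith)]]
    exact Real.sqrt_le_sqrt hvm
  have hsum : (1:ℝ) ≤ Real.sqrt u + Real.sqrt v := by linarith
  have hmul : (Real.sqrt v - Real.sqrt u) * (Real.sqrt v + Real.sqrt u) = v - u := by
    have h1 := Real.sq_sqrt hun
    have h2 := Real.sq_sqrt hvn
    nlinarith
  have hdiff : |Real.sqrt v - Real.sqrt u| ≤ |v - u| := by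
    calc |Real.sqrt v - Real.sqrt u|
        ≤ |Real.sqrt v - Real.sqrt u| * (Real.sqrt v + Real.sqrt u) := by
          nlinarith [abs_nonneg (Real.sqrt v - Real.sqrt u)]
      _ = |v - u| := by
          rw [← hmul, abs_mul, abs_of_nonneg (by linarith : (0:ℝ) ≤ Real.sqrt v + Real.sqrt u)]
  have hvu : |v - u| ≤ 4 * μ * |y - x| := by
    have : v - u = 4 * μ * (Real.sin x ^ 2 - Real.sin y ^ 2) := by rw [hu, hv]; ring
    rw [this, sin_sq_diff, abs_mul, abs_of_nonneg (by linarith : (0:ℝ) ≤ 4*μ), abs_mul]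
    have h1 : |Real.sin (x + y)| ≤ 1 := Real.abs_sin_le_one _
    have h2 : |Real.sin (x - y)| ≤ |x - y| := Real.abs_sin_le_abs
    have h3 : |x - y| = |y - x| := abs_sub_comm x y
    have h4 : (0:ℝ) ≤ |Real.sin (x - y)| := abs_nonneg _
    calc 4 * μ * (|Real.sin (x+y)| * |Real.sin (x-y)|)
        ≤ 4 * μ * (1 * |Real.sin (x-y)|) := by
          apply mul_le_mul_of_nonneg_left _ (by linarith)
          exact mul_le_mul_of_nonneg_right h1 h4
      _ ≤ 4 * μ * |y - x| := by rw [one_mul, ← h3]; linarith [mul_le_mul_of_nonneg_left h2 (by linarith : (0:ℝ) ≤ 4*μ)]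
  have heq : lamPlus μ y - lamPlus μ x = Real.sqrt v - Real.sqrt u := by
    unfold lamPlus; rw [← hu, ← hv]; ring
  rw [heq]; linarith

lemma lam_cont (μ : ℝ) : Continuous (fun ω => lamPlus μ ω) := by
  unfold lamPlus; fun_prop

theorem stmt_12 (c : ℝ) (hc : 2 < c ^ 2) :
    ∃ μ₀ : ℝ, 0 < μ₀ ∧ μ₀ < 1 ∧
      ∀ μ : ℝ, 0 < μ → μ < μ₀ →
        ∃! ω : ℝ, 0 ≤ ω ∧ c ^ 2 * μ * ω ^ 2 = lamPlus μ ω := by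
  refine ⟨1/2, by norm_num, by norm_num, ?_⟩
  intro μ hμ hμ2
  have hμ1 : μ < 1 := by linarith
  set A := c ^ 2 * μ with hA
  have hApos : 0 < A := by positivity
  set a := Real.sqrt (2 / A) with ha
  set b := Real.sqrt ((2 + 2 * μ) / A) with hb
  have ha2 : a ^ 2 = 2 / A := Real.sq_sqrt (by positivity)
  have hb2 : b ^ 2 = (2 + 2 * μ) / A := Real.sq_sqrt (by positivity)
  have hanneg : 0 ≤ a := Real.sqrt_nonneg _
  have hbneg : 0 ≤ b := Real.sqrt_nonneg _
  have hab : a ≤ b := Real.sqrt_le_sqrt (by gcongr <;> linarith)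
  -- slope bound : 2 * A * a > 4 * μ
  have hslope : 4 * μ < 2 * (A * a) := by
    have hAa : A * a = Real.sqrt (2 * A) := by
      rw [ha, show (2:ℝ) * A = A^2 * (2 / A) by field_simp, Real.sqrt_mul (by positivity),
        Real.sqrt_sq hApos.le]
    rw [hAa]
    have : 2 * μ < Real.sqrt (2 * A) := by
      rw [show (2:ℝ) * μ = Real.sqrt ((2*μ)^2) by rw [Real.sqrt_sq (by linarith)]]
      apply Real.sqrt_lt_sqrt (by positivity)
      rw [hA]; nlinarith
    linarith
  set g : ℝ → ℝ := fun ω => A * ω ^ 2 - lamPlus μ ω with hg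
  -- strict monotone on [a, ∞)
  have hmono : ∀ x y : ℝ, a ≤ x → x < y → g x < g y := by
    intro x y hax hxy
    have hlip := lam_lip μ x y hμ (by linarith)
    have habs : lamPlus μ y - lamPlus μ x ≤ 4 * μ * (y - x) := by
      have := abs_le.1 hlip
      rw [abs_of_nonneg (by linarith : (0:ℝ) ≤ y - x)] at this
      linarith [this.2]
    have hquad : 2 * (A * a) * (y - x) ≤ A * y ^ 2 - A * x ^ 2 := by
      have h1 : 2 * a ≤ x + y := by linarith
      have h2 : (0:ℝ) ≤ y - x := by linarith
      nlinarith [mul_le_mul_of_nonneg_left (mul_le_mul_of_nonneg_right h1 h2) hApos.le]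
    simp only [hg]
    nlinarith
  -- values at a and b
  have hga : g a ≤ 0 := by
    simp only [hg]
    have : A * a ^ 2 = 2 := by rw [ha2]; field_simp
    rw [this]
    linarith [lam_lower μ a hμ hμ1]
  have hgb : 0 ≤ g b := by
    simp only [hg]
    have : A * b ^ 2 = 2 + 2 * μ := by rw [hb2]; field_simp
    rw [this]
    linarith [lam_upper μ b hμ]
  -- existence by IVT
  have hcont : ContinuousOn g (Set.Icc a b) :=
    ((continuous_const.mul (continuous_pow 2)).sub (lam_cont μ)).continuousOn
  have hivt : (0:ℝ) ∈ Set.Icc (g a) (g b) := ⟨hga, hgb⟩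
  obtain ⟨ω, hωmem, hωz⟩ := intermediate_value_Icc hab hcont hivt
  have hωn : 0 ≤ ω := le_trans hanneg hωmem.1
  have hωeq : c ^ 2 * μ * ω ^ 2 = lamPlus μ ω := by
    have : A * ω ^ 2 - lamPlus μ ω = 0 := hωz
    rw [hA] at this; linarith
  refine ⟨ω, ⟨hωn, hωeq⟩, ?_⟩
  -- uniqueness
  rintro ω' ⟨hω'n, hω'eq⟩
  have hmem' : ∀ z : ℝ, 0 ≤ z → c ^ 2 * μ * z ^ 2 = lamPlus μ z → a ≤ z := by
    intro z hz hzeq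
    have h2 : 2 ≤ A * z ^ 2 := by
      rw [hA, hzeq]; exact lam_lower μ z hμ hμ1
    have : 2 / A ≤ z ^ 2 := by
      rw [div_le_iff₀ hApos]; linarith [h2]
    calc a = Real.sqrt (2 / A) := rfl
      _ ≤ Real.sqrt (z ^ 2) := Real.sqrt_le_sqrt this
      _ = z := Real.sqrt_sq hz
  have haz : a ≤ ω' := hmem' ω' hω'n hω'eq
  have haω : a ≤ ω := hωmem.1
  have hgω : g ω = 0 := hωz
  have hgω' : g ω' = 0 := by
    simp only [hg]; rw [hA] at hω'eq ⊢; linarith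
  rcases lt_trichotomy ω' ω with h | h | h
  · exfalso; have := hmono ω' ω haz h; rw [hgω, hgω'] at this; exact lt_irrefl 0 this
  · exact h
  · exfalso; have := hmono ω ω' haω h; rw [hgω, hgω'] at this; exact lt_irrefl 0 this
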